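/- Let n ≥ 1 and let Q be a nontrivial finite connected quiver which either has at least one loop at some vertex, or contains a local k-generalized path Kronecker quiver with k ≥ 2 at one of its vertices. Then for the dimension vector β = (n, …, n) there exists a point W ∈ F•Rep(Q,β) whose stabilizer in 𝕌 is trivial: if (u_i)_{i∈Q₀} ∈ 𝕌 satisfies u_{h(a)} · W(a) · u_{t(a)}⁻¹ = W(a) for every arrow a ∈ Q₁, then u_i = Iₙ for every vertex i ∈ Q₀. -/

import Mathlib

/-- `UT n X` : `X` is an `n × n` upper triangular complex matrix (an element of 𝔟). -/
def UT (n : ℕ) (X : Matrix (Fin n) (Fin n) ℂ) : Prop :=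
  ∀ i j : Fin n, (j : ℕ) < (i : ℕ) → X i j = 0

/-- `Unip n u` : `u` is a unipotent upper triangular matrix (an element of `U`). -/
def Unip (n : ℕ) (u : Matrix (Fin n) (Fin n) ℂ) : Prop :=
  UT n u ∧ ∀ i : Fin n, u i i = 1

/-- A finite quiver: finite vertex set `Q0`, finite arrow set `Q1`, head and tail maps. -/
structure FinQuiver where
  Q0 : Type
  Q1 : Type
  [fin0 : Fintype Q0]
  [fin1 : Fintype Q1]
  [dec0 : DecidableEq Q0]
  h : Q1 → Q0
  t : Q1 → Q0

attribute [instance] FinQuiver.fin0 FinQuiver.fin1 FinQuiver.dec0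

/-- Adjacency in the underlying undirected graph of the quiver. -/
def FinQuiver.Adj (Q : FinQuiver) (v w : Q.Q0) : Prop :=
  ∃ a : Q.Q1, (Q.t a = v ∧ Q.h a = w) ∨ (Q.t a = w ∧ Q.h a = v)

/-- `Q` is nontrivial and connected: the vertex set is nonempty and any two vertices are
joined by an undirected walk. -/
def FinQuiver.Connected (Q : FinQuiver) : Prop :=
  Nonempty Q.Q0 ∧ ∀ v w : Q.Q0, Relation.ReflTransGen Q.Adj v w

/-- `Q.IsCFPath L v w` : the nonempty list of arrows `L = [a₁, …, a_m]` is a nontrivial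
cycle-free path from `v` to `w`: consecutive arrows compose (`h aᵣ = t a_{r+1}`), the tail of
the first arrow is `v`, the head of the last arrow is `w`, and the sequence of visited
vertices `v, h a₁, …, h a_m` has no repetition. -/
def FinQuiver.IsCFPath (Q : FinQuiver) (L : List Q.Q1) (v w : Q.Q0) : Prop :=
  ∃ hne : L ≠ [],
    L.Chain' (fun a b => Q.h a = Q.t b) ∧
    Q.t (L.head hne) = v ∧ Q.h (L.getLast hne) = w ∧
    (v :: L.map Q.h).Nodup

/-- `Q` has a loop at some vertex. -/
def FinQuiver.HasLoop (Q : FinQuiver) : Prop := ∃ a : Q.Q1, Q.h a = Q.t a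

/-- `Q` contains a local `k`-generalized path Kronecker quiver with `k ≥ 2` at one of its
vertices: there are vertices `i ≠ j` and `k ≥ 2` pairwise distinct nontrivial cycle-free
paths, each going either from `i` to `j` or from `j` to `i`. -/
def FinQuiver.HasLocalPathKronecker (Q : FinQuiver) : Prop :=
  ∃ i j : Q.Q0, j ≠ i ∧ ∃ k : ℕ, 2 ≤ k ∧ ∃ P : Fin k → List Q.Q1,
    Function.Injective P ∧
    ∀ r : Fin k, Q.IsCFPath (P r) i j ∨ Q.IsCFPath (P r) j i


namespace FRepAux

open Relation

/-- Walk along a list of arrows from `v` to `w`. -/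
def ChainFrom (Q : FinQuiver) : List Q.Q1 → Q.Q0 → Q.Q0 → Prop
  | [], v, w => v = w
  | a :: L, v, w => Q.t a = v ∧ ChainFrom Q L (Q.h a) w

variable {Q : FinQuiver}

@[simp] lemma chainFrom_nil {v w : Q.Q0} : ChainFrom Q [] v w ↔ v = w := Iff.rfl

@[simp] lemma chainFrom_cons {a : Q.Q1} {L : List Q.Q1} {v w : Q.Q0} :
    ChainFrom Q (a :: L) v w ↔ Q.t a = v ∧ ChainFrom Q L (Q.h a) w := Iff.rfl

lemma chainFrom_of_path : ∀ (L : List Q.Q1) (hne : L ≠ [])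
    (_hch : L.Chain' (fun a b => Q.h a = Q.t b))
    {v w : Q.Q0} (_hv : Q.t (L.head hne) = v) (_hw : Q.h (L.getLast hne) = w),
    ChainFrom Q L v w := by
  intro L
  induction L with
  | nil => intro hne; exact absurd rfl hne
  | cons a T ih =>
    intro hne hch v w hv hw
    cases T with
    | nil =>
      refine ⟨hv, ?_⟩
      simpa using hw
    | cons b T' =>
      unfold List.Chain' at hch
      rw [List.isChain_cons_cons] at hch
      refine ⟨hv, ih (by simp) hch.2 ?_ ?_⟩
      · simpa using hch.1.symm
      · rw [← hw, List.getLast_cons (by simp : (b :: T') ≠ [])]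

/-- Adjacency avoiding the arrow `a0`. -/
def Adj' (Q : FinQuiver) (a0 : Q.Q1) (v w : Q.Q0) : Prop :=
  ∃ a : Q.Q1, a ≠ a0 ∧ ((Q.t a = v ∧ Q.h a = w) ∨ (Q.t a = w ∧ Q.h a = v))

lemma adj'_symm {a0 : Q.Q1} : Symmetric (Adj' Q a0) :=
  fun _ _ ⟨a, hne, h⟩ => ⟨a, hne, h.symm⟩

lemma rtg_symm {a0 : Q.Q1} {v w : Q.Q0} (h : ReflTransGen (Adj' Q a0) v w) :
    ReflTransGen (Adj' Q a0) w v :=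
  by
  induction h with
  | refl => exact ReflTransGen.refl
  | tail _ hs ih => exact ReflTransGen.head (adj'_symm hs) ih

lemma reach_of_chainFrom {a0 : Q.Q1} : ∀ {L : List Q.Q1} {v w : Q.Q0},
    ChainFrom Q L v w → a0 ∉ L → ReflTransGen (Adj' Q a0) v w := by
  intro L
  induction L with
  | nil => intro v w hL _; exact hL ▸ ReflTransGen.refl
  | cons a T ih =>
    intro v w hL hni
    simp only [List.mem_cons, not_or] at hni
    exact ReflTransGen.head ⟨a, Ne.symm hni.1, Or.inl ⟨hL.1, rfl⟩⟩ (ih hL.2 hni.2)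

lemma chainFrom_split {a0 : Q.Q1} : ∀ {L : List Q.Q1} {v w : Q.Q0},
    ChainFrom Q L v w → a0 ∈ L →
    ∃ L1 L2, L = L1 ++ a0 :: L2 ∧ ChainFrom Q L1 v (Q.t a0) ∧ ChainFrom Q L2 (Q.h a0) w := by
  intro L
  induction L with
  | nil => intro v w _ ha; simp at ha
  | cons a T ih =>
    intro v w hL ha
    obtain ⟨hv, hT⟩ := hL
    rcases List.mem_cons.mp ha with h | h
    · refine ⟨[], T, by rw [h]; rfl, ?_, ?_⟩
      · show v = Q.t a0; rw [h, hv]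
      · rw [h]; exact hT
    · obtain ⟨L1, L2, hEq, h1, h2⟩ := ih hT h
      exact ⟨a :: L1, L2, by rw [hEq]; simp, ⟨hv, h1⟩, h2⟩

lemma key_reach {a0 : Q.Q1} {L1 L2 : List Q.Q1} {v w : Q.Q0}
    (h1 : ChainFrom Q L1 v w) (nod1 : L1.Nodup)
    (h2 : ChainFrom Q L2 v w)
    (ha : a0 ∈ L1) (hna : a0 ∉ L2) :
    ReflTransGen (Adj' Q a0) (Q.t a0) (Q.h a0) := by
  obtain ⟨P1, P2, hEq, hp1, hp2⟩ := chainFrom_split h1 ha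
  subst hEq
  have h01 : a0 ∉ P1 := fun hm => (List.disjoint_of_nodup_append nod1) hm (by simp)
  have h02 : a0 ∉ P2 := by
    have := (List.nodup_cons.mp nod1.of_append_right).1
    exact this
  have r1 : ReflTransGen (Adj' Q a0) v (Q.t a0) := reach_of_chainFrom hp1 h01
  have r2 : ReflTransGen (Adj' Q a0) (Q.h a0) w := reach_of_chainFrom hp2 h02
  have r3 : ReflTransGen (Adj' Q a0) v w := reach_of_chainFrom h2 hna
  exact (rtg_symm r1).trans (r3.trans (rtg_symm r2))

lemma key_reach_opp {a0 : Q.Q1} {L1 L2 : List Q.Q1} {v w : Q.Q0}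
    (h1 : ChainFrom Q L1 v w) (nod1 : L1.Nodup)
    (h2 : ChainFrom Q L2 w v) (nod2 : L2.Nodup)
    (ha : a0 ∈ L1) :
    ReflTransGen (Adj' Q a0) (Q.t a0) (Q.h a0) := by
  obtain ⟨P1, P2, hEq, hp1, hp2⟩ := chainFrom_split h1 ha
  subst hEq
  have h01 : a0 ∉ P1 := fun hm => (List.disjoint_of_nodup_append nod1) hm (by simp)
  have h02 : a0 ∉ P2 := (List.nodup_cons.mp nod1.of_append_right).1
  have r1 : ReflTransGen (Adj' Q a0) v (Q.t a0) := reach_of_chainFrom hp1 h01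
  have r2 : ReflTransGen (Adj' Q a0) (Q.h a0) w := reach_of_chainFrom hp2 h02
  by_cases hb : a0 ∈ L2
  · obtain ⟨R1, R2, hEq2, _hq1, hq2⟩ := chainFrom_split h2 hb
    subst hEq2
    have h02' : a0 ∉ R2 := (List.nodup_cons.mp nod2.of_append_right).1
    have r4 : ReflTransGen (Adj' Q a0) (Q.h a0) v := reach_of_chainFrom hq2 h02'
    exact (rtg_symm r1).trans (rtg_symm r4)
  · have r3 : ReflTransGen (Adj' Q a0) w v := reach_of_chainFrom h2 hb
    exact (rtg_symm r1).trans ((rtg_symm r3).trans (rtg_symm r2))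

lemma chainFrom_t_mem : ∀ {L : List Q.Q1} {x w : Q.Q0},
    ChainFrom Q L x w → ∀ a ∈ L, Q.t a = x ∨ Q.t a ∈ L.map Q.h := by
  intro L
  induction L with
  | nil => intro x w _ a ha; simp at ha
  | cons b T ih =>
    intro x w h a ha
    rcases List.mem_cons.mp ha with rfl | ha'
    · exact Or.inl h.1
    · rcases ih h.2 a ha' with he | hm
      · right; simp [he]
      · right; simp only [List.map_cons, List.mem_cons]; exact Or.inr hm

lemma chainFrom_w_mem : ∀ {L : List Q.Q1} {v w : Q.Q0},
    ChainFrom Q L v w → L ≠ [] → w ∈ L.map Q.h := by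
  intro L
  induction L with
  | nil => intro v w _ hne; exact absurd rfl hne
  | cons a T ih =>
    intro v w h _
    rcases eq_or_ne T [] with rfl | hT
    · obtain ⟨-, h2⟩ := h
      have h2' : Q.h a = w := chainFrom_nil.mp h2
      simp [← h2']
    · simp only [List.map_cons, List.mem_cons]
      exact Or.inr (ih h.2 hT)

lemma paths_diff : ∀ (L1 L2 : List Q.Q1) (v w : Q.Q0),
    ChainFrom Q L1 v w → (v :: L1.map Q.h).Nodup →
    ChainFrom Q L2 v w → (v :: L2.map Q.h).Nodup →
    L1 ≠ [] → L2 ≠ [] → L1 ≠ L2 →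
    (∃ a ∈ L1, a ∉ L2) ∨ (∃ a ∈ L2, a ∉ L1) := by
  intro L1
  induction L1 with
  | nil => intro L2 v w _ _ _ _ h _ _; exact absurd rfl h
  | cons a T1 ih =>
    intro L2 v w hc1 hn1 hc2 hn2 _ hL2ne hne
    obtain ⟨b, T2, rfl⟩ : ∃ b T2, L2 = b :: T2 := by
      cases L2 with
      | nil => exact absurd rfl hL2ne
      | cons b T2 => exact ⟨b, T2, rfl⟩
    obtain ⟨ha, hT1⟩ := hc1
    obtain ⟨hb, hT2⟩ := hc2
    by_cases hab : a = b
    · subst hab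
      rcases eq_or_ne T1 [] with rfl | hT1ne
      · rcases eq_or_ne T2 [] with rfl | hT2ne
        · exact absurd rfl hne
        · exfalso
          have hw : Q.h a = w := hT1
          have hmem : w ∈ T2.map Q.h := chainFrom_w_mem hT2 hT2ne
          have hnot : Q.h a ∉ T2.map Q.h := by
            have h' : (Q.h a :: T2.map Q.h).Nodup := by
              simpa using hn2.of_cons
            exact (List.nodup_cons.mp h').1
          exact hnot (hw ▸ hmem)
      · rcases eq_or_ne T2 [] with rfl | hT2ne
        · exfalso
          have hw : Q.h a = w := hT2
          have hmem : w ∈ T1.map Q.h := chainFrom_w_mem hT1 hT1ne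
          have hnot : Q.h a ∉ T1.map Q.h := by
            have h' : (Q.h a :: T1.map Q.h).Nodup := by
              simpa using hn1.of_cons
            exact (List.nodup_cons.mp h').1
          exact hnot (hw ▸ hmem)
        · have hT1T2 : T1 ≠ T2 := fun e => hne (by rw [e])
          have hn1' : (Q.h a :: T1.map Q.h).Nodup := by simpa using hn1.of_cons
          have hn2' : (Q.h a :: T2.map Q.h).Nodup := by simpa using hn2.of_cons
          have haT1 : a ∉ T1 := by
            have hmapnd : ((a :: T1).map Q.h).Nodup := by
              simpa using hn1'
            exact (List.nodup_cons.mp (hmapnd.of_map Q.h)).1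
          have haT2 : a ∉ T2 := by
            have hmapnd : ((a :: T2).map Q.h).Nodup := by
              simpa using hn2'
            exact (List.nodup_cons.mp (hmapnd.of_map Q.h)).1
          rcases ih T2 (Q.h a) w hT1 hn1' hT2 hn2' hT1ne hT2ne hT1T2 with
            ⟨c, hc, hcn⟩ | ⟨c, hc, hcn⟩
          · refine Or.inl ⟨c, List.mem_cons_of_mem _ hc, ?_⟩
            intro hmem
            rcases List.mem_cons.mp hmem with rfl | h'
            · exact haT1 hc
            · exact hcn h'
          · refine Or.inr ⟨c, List.mem_cons_of_mem _ hc, ?_⟩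
            intro hmem
            rcases List.mem_cons.mp hmem with rfl | h'
            · exact haT2 hc
            · exact hcn h'
    · refine Or.inl ⟨a, List.mem_cons_self, ?_⟩
      intro hmem
      rcases List.mem_cons.mp hmem with h' | h'
      · exact hab h'
      · have hvmem : v ∈ (b :: T2).map Q.h := by
          rcases chainFrom_t_mem hT2 a h' with he | hm
          · simp only [List.map_cons, List.mem_cons]
            exact Or.inl (by rw [← ha, he])
          · simp only [List.map_cons, List.mem_cons]
            exact Or.inr (ha ▸ hm)
        exact (List.nodup_cons.mp hn2).1 hvmem

lemma cf_of {L : List Q.Q1} {v w : Q.Q0} (h : Q.IsCFPath L v w) :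
    ChainFrom Q L v w ∧ (v :: L.map Q.h).Nodup ∧ L ≠ [] ∧ L.Nodup := by
  obtain ⟨hne, hch, hv, hw, hnd⟩ := h
  refine ⟨chainFrom_of_path L hne hch hv hw, hnd, hne, ?_⟩
  exact (List.nodup_cons.mp hnd).2.of_map Q.h

lemma exists_good (Q : FinQuiver) (hQ : Q.HasLoop ∨ Q.HasLocalPathKronecker) :
    ∃ a0 : Q.Q1, ReflTransGen (Adj' Q a0) (Q.t a0) (Q.h a0) := by
  rcases hQ with ⟨a, ha⟩ | ⟨i, j, _hji, k, hk, P, hinj, hP⟩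
  · exact ⟨a, ha ▸ ReflTransGen.refl⟩
  · have h01 : (⟨0, by omega⟩ : Fin k) ≠ ⟨1, by omega⟩ := by
      simp [Fin.ext_iff]
    have hPne : P ⟨0, by omega⟩ ≠ P ⟨1, by omega⟩ := fun e => h01 (hinj e)
    rcases hP ⟨0, by omega⟩ with h0 | h0 <;> rcases hP ⟨1, by omega⟩ with h1 | h1
    · obtain ⟨c0, n0, e0, d0⟩ := cf_of h0
      obtain ⟨c1, n1, e1, d1⟩ := cf_of h1
      rcases paths_diff _ _ _ _ c0 n0 c1 n1 e0 e1 hPne with ⟨a0, ha1, ha2⟩ | ⟨a0, ha1, ha2⟩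
      · exact ⟨a0, key_reach c0 d0 c1 ha1 ha2⟩
      · exact ⟨a0, key_reach c1 d1 c0 ha1 ha2⟩
    · obtain ⟨c0, n0, e0, d0⟩ := cf_of h0
      obtain ⟨c1, n1, e1, d1⟩ := cf_of h1
      obtain ⟨a0, ha0⟩ := List.exists_mem_of_ne_nil _ e0
      exact ⟨a0, key_reach_opp c0 d0 c1 d1 ha0⟩
    · obtain ⟨c0, n0, e0, d0⟩ := cf_of h0
      obtain ⟨c1, n1, e1, d1⟩ := cf_of h1
      obtain ⟨a0, ha0⟩ := List.exists_mem_of_ne_nil _ e0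
      exact ⟨a0, key_reach_opp c0 d0 c1 d1 ha0⟩
    · obtain ⟨c0, n0, e0, d0⟩ := cf_of h0
      obtain ⟨c1, n1, e1, d1⟩ := cf_of h1
      rcases paths_diff _ _ _ _ c0 n0 c1 n1 e0 e1 hPne with ⟨a0, ha1, ha2⟩ | ⟨a0, ha1, ha2⟩
      · exact ⟨a0, key_reach c0 d0 c1 ha1 ha2⟩
      · exact ⟨a0, key_reach c1 d1 c0 ha1 ha2⟩

lemma unip_det {n : ℕ} {c : Matrix (Fin n) (Fin n) ℂ} (hc : Unip n c) : IsUnit c.det := by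
  have hbt : c.BlockTriangular id := fun i j hij => hc.1 i j hij
  rw [Matrix.det_of_upperTriangular hbt]
  simp [hc.2]

end FRepAux

/-- **Theorem 1.1 (1).** If `Q` is a nontrivial finite connected quiver with a loop or with a
local `k`-generalized path Kronecker quiver (`k ≥ 2`) at some vertex, then for
`β = (n, …, n)` there is a point `W` of the complete filtered representation space
`F•Rep(Q,β) = ∏_{a ∈ Q₁} 𝔟` whose stabilizer in `𝕌 = U^{Q₀}` is trivial. -/
theorem filtered_rep_has_point_with_trivial_unipotent_stabilizer
    (n : ℕ) (hn : 1 ≤ n) (Q : FinQuiver)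
    (hconn : Q.Connected)
    (hQ : Q.HasLoop ∨ Q.HasLocalPathKronecker) :
    ∃ W : Q.Q1 → Matrix (Fin n) (Fin n) ℂ,
      (∀ a : Q.Q1, UT n (W a)) ∧
      ∀ u : Q.Q0 → Matrix (Fin n) (Fin n) ℂ,
        (∀ v : Q.Q0, Unip n (u v)) →
        (∀ a : Q.Q1, u (Q.h a) * W a * (u (Q.t a))⁻¹ = W a) →
        ∀ v : Q.Q0, u v = 1 := by
  classical
  obtain ⟨a0, hreach⟩ := FRepAux.exists_good Q hQ
  refine ⟨fun a => if a = a0 then Matrix.diagonal (fun k : Fin n => ((k : ℕ) : ℂ)) else 1,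
    ?_, ?_⟩
  · intro a i j hij
    have hne : i ≠ j := fun e => by subst e; exact lt_irrefl _ hij
    by_cases h : a = a0
    · simp [h, Matrix.diagonal_apply_ne _ hne]
    · simp [h, Matrix.one_apply_ne hne]
  · intro u hu hrel
    have hdet : ∀ v : Q.Q0, IsUnit (u v).det := fun v => FRepAux.unip_det (hu v)
    have step : ∀ a : Q.Q1, a ≠ a0 → u (Q.h a) = u (Q.t a) := by
      intro a ha
      have h : u (Q.h a) * (u (Q.t a))⁻¹ = 1 := by
        simpa [ha] using hrel a
      calc u (Q.h a) = u (Q.h a) * ((u (Q.t a))⁻¹ * u (Q.t a)) := by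
            rw [Matrix.nonsing_inv_mul _ (hdet _), mul_one]
        _ = (u (Q.h a) * (u (Q.t a))⁻¹) * u (Q.t a) := by rw [mul_assoc]
        _ = u (Q.t a) := by rw [h, one_mul]
    have const : ∀ {v w : Q.Q0}, Relation.ReflTransGen (FRepAux.Adj' Q a0) v w →
        u v = u w := by
      intro v w h
      induction h with
      | refl => rfl
      | tail _ hstep ih =>
        obtain ⟨a, hne, hcase⟩ := hstep
        rcases hcase with ⟨h1, h2⟩ | ⟨h1, h2⟩
        · rw [ih, ← h1, ← h2]; exact (step a hne).symm
        · rw [ih, ← h1, ← h2]; exact step a hne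
    have hc : u (Q.t a0) = u (Q.h a0) := const hreach
    have hrel0 : u (Q.h a0) * Matrix.diagonal (fun k : Fin n => ((k : ℕ) : ℂ)) *
        (u (Q.t a0))⁻¹ = Matrix.diagonal (fun k : Fin n => ((k : ℕ) : ℂ)) := by
      simpa using hrel a0
    rw [← hc] at hrel0
    set c := u (Q.t a0) with hcdef
    set D : Matrix (Fin n) (Fin n) ℂ := Matrix.diagonal (fun k : Fin n => ((k : ℕ) : ℂ)) with hD
    have hcomm : c * D = D * c := by
      calc c * D = (c * D * c⁻¹) * c := by
            rw [mul_assoc (c * D), Matrix.nonsing_inv_mul _ (hdet _), mul_one]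
        _ = D * c := by rw [hrel0]
    have hc1 : c = 1 := by
      ext i j
      by_cases hij : i = j
      · subst hij
        simp [hcdef, (hu (Q.t a0)).2 i, Matrix.one_apply_eq]
      · have hent := congrFun (congrFun hcomm i) j
        have hent' : c i j * ((j : ℕ) : ℂ) = ((i : ℕ) : ℂ) * c i j := by
          simpa [hD, Matrix.mul_diagonal, Matrix.diagonal_mul] using hent
        have hz : c i j * (((j : ℕ) : ℂ) - ((i : ℕ) : ℂ)) = 0 := by
          linear_combination hent'
        have hd : (((j : ℕ) : ℂ) - ((i : ℕ) : ℂ)) ≠ 0 := by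
          refine sub_ne_zero.mpr ?_
          intro e
          exact hij (Fin.ext (Nat.cast_inj.mp e)).symm
        rw [Matrix.one_apply_ne hij]
        exact (mul_eq_zero.mp hz).resolve_right hd
    have lift : ∀ {x y : Q.Q0}, Q.Adj x y →
        Relation.ReflTransGen (FRepAux.Adj' Q a0) x y := by
      rintro x y ⟨a, hcase⟩
      by_cases ha : a = a0
      · subst ha
        rcases hcase with ⟨h1, h2⟩ | ⟨h1, h2⟩
        · rw [← h1, ← h2]; exact hreach
        · rw [← h1, ← h2]; exact FRepAux.rtg_symm hreach
      · exact Relation.ReflTransGen.single ⟨a, ha, hcase⟩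
    have mono : ∀ {x y : Q.Q0}, Relation.ReflTransGen Q.Adj x y →
        Relation.ReflTransGen (FRepAux.Adj' Q a0) x y := by
      intro x y h
      induction h with
      | refl => exact Relation.ReflTransGen.refl
      | tail _ hstep ih => exact ih.trans (lift hstep)
    intro v
    have : u v = c := const (mono (hconn.2 v (Q.t a0)))
    rw [this, hc1]
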